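/- arXiv:1408.6719 — 3 statements merged into one kernel-verified Lean document; each statement's English description precedes it below -/
import Mathlib

section
/- For star bodies K, L about the origin in ℝ^n and φ ∈ Φ, and any T ∈ GL(n), the dual Orlicz mixed volume satisfies Ṽ_φ(TK, L) = |det T| · Ṽ_φ(K, T^{-1}L). -/
open MeasureTheory Metric Set
open scoped NNReal ENNReal

noncomputable section

/-- The radial function of a set: `ρ_K x = sup {r ≥ 0 : r • x ∈ K}`. -/
def radialFn {n : ℕ} (K : Set (EuclideanSpace ℝ (Fin n))) (x : EuclideanSpace ℝ (Fin n)) : ℝ :=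
  sSup {r : ℝ | 0 ≤ r ∧ r • x ∈ K}

/-- A star body about the origin: compact, with `0` in its interior, star-shaped
with respect to the origin, and with continuous radial function on the sphere. -/
def IsStarBody {n : ℕ} (K : Set (EuclideanSpace ℝ (Fin n))) : Prop :=
  IsCompact K ∧ (0 : EuclideanSpace ℝ (Fin n)) ∈ interior K ∧
    (∀ x ∈ K, ∀ t : ℝ, t ∈ Icc (0 : ℝ) 1 → t • x ∈ K) ∧
    Continuous fun u : sphere (0 : EuclideanSpace ℝ (Fin n)) 1 => radialFn K u

/-- The spherical Lebesgue measure on the unit sphere `S^{n-1}`. -/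
def sphereMeasure (n : ℕ) : Measure (sphere (0 : EuclideanSpace ℝ (Fin n)) 1) :=
  (volume : Measure (EuclideanSpace ℝ (Fin n))).toSphere

/-- The dual Orlicz mixed volume
`Ṽ_φ(K,L) = ∫_{S^{n-1}} φ (ρ_K/ρ_L) dṼ_K`, with `dṼ_K = ρ_K^n/n dS`. -/
def dualOrliczMixedVol (n : ℕ) (φ : ℝ → ℝ)
    (K L : Set (EuclideanSpace ℝ (Fin n))) : ℝ :=
  ∫ u, φ (radialFn K u / radialFn L u) * ((radialFn K u) ^ n / n) ∂(sphereMeasure n)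

variable {n : ℕ}


lemma radialFn_set_eq {K : Set (EuclideanSpace ℝ (Fin n))} (hK : IsStarBody K)
    {x : EuclideanSpace ℝ (Fin n)} (hx : x ≠ 0) :
    {r : ℝ | 0 ≤ r ∧ r • x ∈ K} = Icc 0 (radialFn K x) := by
  obtain ⟨hKc, hK0, hKs, -⟩ := hK
  have h0K : (0 : EuclideanSpace ℝ (Fin n)) ∈ K := interior_subset hK0
  set S := {r : ℝ | 0 ≤ r ∧ r • x ∈ K} with hS
  have hS0 : (0 : ℝ) ∈ S := ⟨le_refl 0, by simpa using h0K⟩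
  have hxn : 0 < ‖x‖ := norm_pos_iff.2 hx
  obtain ⟨R, hR⟩ := hKc.isBounded.subset_closedBall 0
  have hbdd : BddAbove S := by
    refine ⟨R / ‖x‖, fun r hr => ?_⟩
    have h1 : ‖r • x‖ ≤ R := by
      simpa [mem_closedBall_zero_iff] using hR hr.2
    rw [norm_smul, Real.norm_eq_abs, abs_of_nonneg hr.1] at h1
    exact (le_div_iff₀ hxn).2 h1
  have hclosed : IsClosed S := by
    have : S = Ici 0 ∩ (fun r : ℝ => r • x) ⁻¹' K := rfl
    rw [this]
    exact isClosed_Ici.inter (hKc.isClosed.preimage (continuous_id.smul continuous_const))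
  have hmem : radialFn K x ∈ S := hclosed.csSup_mem ⟨0, hS0⟩ hbdd
  ext r
  constructor
  · intro hr
    exact ⟨hr.1, le_csSup hbdd hr⟩
  · rintro ⟨hr0, hrle⟩
    rcases eq_or_lt_of_le (hmem.1 : (0:ℝ) ≤ radialFn K x) with h0 | hpos
    · have : r = 0 := le_antisymm (by rw [← h0] at hrle; exact hrle) hr0
      rw [this]; exact hS0
    · have ht : r / radialFn K x ∈ Icc (0:ℝ) 1 :=
        ⟨div_nonneg hr0 hpos.le, (div_le_one hpos).2 hrle⟩
      have := hKs _ hmem.2 _ ht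
      rw [smul_smul, div_mul_cancel₀ _ hpos.ne'] at this
      exact ⟨hr0, this⟩

lemma radialFn_mem_iff {K : Set (EuclideanSpace ℝ (Fin n))} (hK : IsStarBody K)
    {x : EuclideanSpace ℝ (Fin n)} (hx : x ≠ 0) {r : ℝ} :
    (0 ≤ r ∧ r • x ∈ K) ↔ r ∈ Icc 0 (radialFn K x) := by
  rw [← radialFn_set_eq hK hx]; rfl

lemma radialFn_nonneg {K : Set (EuclideanSpace ℝ (Fin n))} (hK : IsStarBody K)
    {x : EuclideanSpace ℝ (Fin n)} (hx : x ≠ 0) : 0 ≤ radialFn K x := by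
  have h0K : (0 : EuclideanSpace ℝ (Fin n)) ∈ K := interior_subset hK.2.1
  have : (0:ℝ) ∈ Icc 0 (radialFn K x) := by
    rw [← radialFn_set_eq hK hx]; exact ⟨le_refl 0, by simpa using h0K⟩
  exact this.2

lemma radialFn_pos {K : Set (EuclideanSpace ℝ (Fin n))} (hK : IsStarBody K)
    {x : EuclideanSpace ℝ (Fin n)} (hx : x ≠ 0) : 0 < radialFn K x := by
  obtain ⟨ε, hε, hball⟩ := Metric.mem_nhds_iff.1 (mem_interior_iff_mem_nhds.1 hK.2.1)
  have hxn : 0 < ‖x‖ := norm_pos_iff.2 hx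
  set r := ε / (2 * ‖x‖) with hr
  have hrpos : 0 < r := by positivity
  have hmem : r • x ∈ K := by
    apply hball
    rw [mem_ball_zero_iff, norm_smul, Real.norm_eq_abs, abs_of_pos hrpos, hr]
    rw [div_mul_eq_mul_div, div_lt_iff₀ (by positivity)]
    nlinarith
  have : r ∈ Icc 0 (radialFn K x) := (radialFn_mem_iff hK hx).1 ⟨hrpos.le, hmem⟩
  exact lt_of_lt_of_le hrpos this.2

lemma Icc_zero_right_inj {a b : ℝ} (ha : 0 ≤ a) (hb : 0 ≤ b) (h : Icc (0:ℝ) a = Icc 0 b) :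
    a = b := by
  have h1 : a ∈ Icc (0:ℝ) b := h ▸ right_mem_Icc.2 ha
  have h2 : b ∈ Icc (0:ℝ) a := h.symm ▸ right_mem_Icc.2 hb
  exact le_antisymm h1.2 h2.2

lemma radialFn_smul {K : Set (EuclideanSpace ℝ (Fin n))} (hK : IsStarBody K)
    {x : EuclideanSpace ℝ (Fin n)} (hx : x ≠ 0) {c : ℝ} (hc : 0 < c) :
    radialFn K (c • x) = radialFn K x / c := by
  have hcx : c • x ≠ 0 := smul_ne_zero hc.ne' hx
  refine Icc_zero_right_inj (radialFn_nonneg hK hcx)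
    (div_nonneg (radialFn_nonneg hK hx) hc.le) ?_
  rw [← radialFn_set_eq hK hcx]
  ext r
  simp only [mem_setOf_eq, smul_smul, mem_Icc]
  constructor
  · rintro ⟨h0, hm⟩
    have := (radialFn_mem_iff hK hx).1 ⟨by positivity, hm⟩
    exact ⟨h0, (le_div_iff₀ hc).2 (by linarith [this.2, mul_comm r c] : r * c ≤ radialFn K x)⟩
  · rintro ⟨h0, hle⟩
    have : r * c ∈ Icc 0 (radialFn K x) :=
      ⟨by positivity, by rw [← le_div_iff₀ hc] at *; exact hle⟩
    have h2 := (radialFn_mem_iff hK hx).2 this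
    exact ⟨h0, h2.2⟩

lemma radialFn_image (T : EuclideanSpace ℝ (Fin n) ≃ₗ[ℝ] EuclideanSpace ℝ (Fin n))
    (K : Set (EuclideanSpace ℝ (Fin n))) (x : EuclideanSpace ℝ (Fin n)) :
    radialFn (T '' K) x = radialFn K (T.symm x) := by
  unfold radialFn
  congr 1
  ext r
  simp only [mem_setOf_eq, and_congr_right_iff]
  intro _
  constructor
  · rintro ⟨y, hy, hyx⟩
    have hy2 : y = r • T.symm x := by
      apply T.injective
      rw [_root_.map_smul, T.apply_symm_apply]
      exact hyx
    rwa [← hy2]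
  · intro h
    refine ⟨r • T.symm x, h, ?_⟩
    show T (r • T.symm x) = r • x
    rw [_root_.map_smul, T.apply_symm_apply]

lemma radialFn_continuousOn {K : Set (EuclideanSpace ℝ (Fin n))} (hK : IsStarBody K) :
    ContinuousOn (radialFn K) ({0}ᶜ : Set (EuclideanSpace ℝ (Fin n))) := by
  rw [continuousOn_iff_continuous_restrict]
  have hc := hK.2.2.2
  have hne : ∀ x : ({0}ᶜ : Set (EuclideanSpace ℝ (Fin n))), x.1 ≠ 0 := fun x => x.2
  set q : ({0}ᶜ : Set (EuclideanSpace ℝ (Fin n))) → sphere (0 : EuclideanSpace ℝ (Fin n)) 1 :=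
    fun x => ⟨‖x.1‖⁻¹ • x.1, by
      rw [mem_sphere_zero_iff_norm, norm_smul, norm_inv, norm_norm,
        inv_mul_cancel₀ (norm_ne_zero_iff.2 (hne x))]⟩ with hq
  have hqc : Continuous q := by
    refine Continuous.subtype_mk ?_ _
    exact (continuous_subtype_val.norm.inv₀ fun x => norm_ne_zero_iff.2 (hne x)).smul
      continuous_subtype_val
  have key : ({0}ᶜ : Set (EuclideanSpace ℝ (Fin n))).domRestrict (radialFn K) =
      fun x => radialFn K (q x) * ‖x.1‖⁻¹ := by
    funext x
    have hxn : 0 < ‖x.1‖ := norm_pos_iff.2 (hne x)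
    have h1 : x.1 = ‖x.1‖ • (‖x.1‖⁻¹ • x.1) := by
      rw [smul_smul, mul_inv_cancel₀ hxn.ne', one_smul]
    have h2 : (‖x.1‖⁻¹ • x.1 : EuclideanSpace ℝ (Fin n)) ≠ 0 :=
      smul_ne_zero (inv_ne_zero hxn.ne') (hne x)
    calc radialFn K x.1 = radialFn K (‖x.1‖ • (‖x.1‖⁻¹ • x.1)) := by rw [← h1]
      _ = radialFn K (‖x.1‖⁻¹ • x.1) / ‖x.1‖ := radialFn_smul hK h2 hxn
      _ = radialFn K (q x) * ‖x.1‖⁻¹ := by rw [div_eq_mul_inv]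
  rw [key]
  exact (hc.comp hqc).mul (continuous_subtype_val.norm.inv₀ fun x => norm_ne_zero_iff.2 (hne x))

lemma isStarBody_image {K : Set (EuclideanSpace ℝ (Fin n))} (hK : IsStarBody K)
    (T : EuclideanSpace ℝ (Fin n) ≃ₗ[ℝ] EuclideanSpace ℝ (Fin n)) : IsStarBody (T '' K) := by
  have hT : Continuous T := (T : EuclideanSpace ℝ (Fin n) →ₗ[ℝ] EuclideanSpace ℝ (Fin n)).continuous_of_finiteDimensional
  refine ⟨hK.1.image hT, ?_, ?_, ?_⟩
  · rw [show T '' K = T.toContinuousLinearEquiv.toHomeomorph '' K from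
        Set.image_congr' fun x => rfl, ← Homeomorph.image_interior]
    exact ⟨0, hK.2.1, by exact map_zero T⟩
  · rintro _ ⟨y, hy, rfl⟩ t ht
    exact ⟨t • y, hK.2.2.1 y hy t ht, _root_.map_smul T t y⟩
  · have : (fun u : sphere (0 : EuclideanSpace ℝ (Fin n)) 1 => radialFn (T '' K) ↑u) =
        fun u : sphere (0 : EuclideanSpace ℝ (Fin n)) 1 => radialFn K (T.symm ↑u) := by
      funext u; exact radialFn_image T K u
    rw [this]
    have hTs : Continuous (fun u : sphere (0 : EuclideanSpace ℝ (Fin n)) 1 => T.symm ↑u) :=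
      ((T.symm : EuclideanSpace ℝ (Fin n) →ₗ[ℝ] EuclideanSpace ℝ (Fin n)).continuous_of_finiteDimensional).comp
        continuous_subtype_val
    refine (radialFn_continuousOn hK).comp_continuous hTs fun u => ?_
    simp only [mem_compl_iff, mem_singleton_iff]
    intro h
    have hu : (u : EuclideanSpace ℝ (Fin n)) ≠ 0 := ne_of_mem_sphere u.2 one_ne_zero
    exact hu (by simpa using congrArg T h)

lemma setIntegral_image_linearEquiv
    (T : EuclideanSpace ℝ (Fin n) ≃ₗ[ℝ] EuclideanSpace ℝ (Fin n))
    {K : Set (EuclideanSpace ℝ (Fin n))} (hKm : MeasurableSet K)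
    (f : EuclideanSpace ℝ (Fin n) → ℝ) :
    ∫ x in T '' K, f x ∂volume =
      |LinearMap.det (T : EuclideanSpace ℝ (Fin n) →ₗ[ℝ] EuclideanSpace ℝ (Fin n))| *
        ∫ y in K, f (T y) ∂volume := by
  set d := LinearMap.det (T : EuclideanSpace ℝ (Fin n) →ₗ[ℝ] EuclideanSpace ℝ (Fin n)) with hdd
  have hd : d ≠ 0 := (LinearEquiv.isUnit_det' T).ne_zero
  let e : EuclideanSpace ℝ (Fin n) ≃ᵐ EuclideanSpace ℝ (Fin n) :=
    T.toContinuousLinearEquiv.toHomeomorph.toMeasurableEquiv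
  have hecoe : (⇑e) = ⇑(T : EuclideanSpace ℝ (Fin n) →ₗ[ℝ] EuclideanSpace ℝ (Fin n)) := rfl
  have himg : T '' K = e '' K := rfl
  have hmeasimg : MeasurableSet (T '' K) := by
    rw [himg]; exact e.measurableEmbedding.measurableSet_image.2 hKm
  have hpre : e ⁻¹' (T '' K) = K := by
    rw [himg, Set.preimage_image_eq K e.injective]
  have hmap : Measure.map (⇑e) (volume : Measure (EuclideanSpace ℝ (Fin n))) =
      ENNReal.ofReal |d⁻¹| • volume := by
    rw [hecoe, hdd]
    exact Measure.map_linearMap_addHaar_eq_smul_addHaar volume hd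
  have key : ∫ y in K, f (T y) ∂(volume : Measure (EuclideanSpace ℝ (Fin n)))
      = |d|⁻¹ * ∫ x in T '' K, f x ∂volume := by
    calc ∫ y in K, f (T y) ∂(volume : Measure (EuclideanSpace ℝ (Fin n)))
        = ∫ y, f (e y) ∂(volume.restrict K) := rfl
      _ = ∫ x, f x ∂((volume.restrict K).map e) := (integral_map_equiv e f).symm
      _ = ∫ x, f x ∂((Measure.map (⇑e) volume).restrict (T '' K)) := by
          rw [Measure.restrict_map e.measurable hmeasimg, hpre]
      _ = ∫ x, f x ∂((ENNReal.ofReal |d⁻¹| • volume).restrict (T '' K)) := by rw [hmap]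
      _ = |d|⁻¹ * ∫ x in T '' K, f x ∂volume := by
          rw [Measure.restrict_smul, integral_smul_measure,
            ENNReal.toReal_ofReal (abs_nonneg _), abs_inv, smul_eq_mul]
  rw [key, ← mul_assoc, mul_inv_cancel₀ (abs_ne_zero.2 hd), one_mul]

lemma polar_integral (hn : 0 < n) {K : Set (EuclideanSpace ℝ (Fin n))} (hK : IsStarBody K)
    {f : EuclideanSpace ℝ (Fin n) → ℝ} (hf : ContinuousOn f ({0}ᶜ : Set (EuclideanSpace ℝ (Fin n))))
    (hhom : ∀ c : ℝ, 0 < c → ∀ x : EuclideanSpace ℝ (Fin n), x ≠ 0 → f (c • x) = f x) :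
    ∫ u, f ↑u * ((radialFn K ↑u) ^ n / n) ∂(sphereMeasure n) = ∫ x in K, f x ∂volume := by
  haveI : Nonempty (Fin n) := ⟨⟨0, hn⟩⟩
  haveI : Nontrivial (EuclideanSpace ℝ (Fin n)) := by
    refine ⟨EuclideanSpace.single ⟨0, hn⟩ 1, 0, fun h => ?_⟩
    have := congrArg (fun v => v ⟨0, hn⟩) h
    simp [EuclideanSpace.single_apply] at this
  have hdim : Module.finrank ℝ (EuclideanSpace ℝ (Fin n)) = n := finrank_euclideanSpace_fin
  have hKmeas : MeasurableSet K := hK.1.isClosed.measurableSet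
  have hfm : Measurable f := measurable_of_continuousOn_compl_singleton 0 hf
  have hsub : sphere (0 : EuclideanSpace ℝ (Fin n)) 1 ⊆ ({0}ᶜ : Set (EuclideanSpace ℝ (Fin n))) :=
    fun x hx => ne_of_mem_sphere hx one_ne_zero
  obtain ⟨C, hC⟩ :=
    (isCompact_sphere (0 : EuclideanSpace ℝ (Fin n)) 1).exists_bound_of_continuousOn (hf.mono hsub)
  have hC0 : 0 ≤ C := by
    obtain ⟨z, hz⟩ := (NormedSpace.sphere_nonempty (E := EuclideanSpace ℝ (Fin n)) (x := 0) (r := 1)).2 zero_le_one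
    exact le_trans (norm_nonneg _) (hC z hz)
  have hbound : ∀ x : EuclideanSpace ℝ (Fin n), x ≠ 0 → ‖f x‖ ≤ C := by
    intro x hx
    have hxn : 0 < ‖x‖ := norm_pos_iff.2 hx
    have hmem : ‖x‖⁻¹ • x ∈ sphere (0 : EuclideanSpace ℝ (Fin n)) 1 := by
      rw [mem_sphere_zero_iff_norm, norm_smul, norm_inv, norm_norm, inv_mul_cancel₀ hxn.ne']
    have h := hC _ hmem
    rwa [hhom ‖x‖⁻¹ (by positivity) x hx] at h
  obtain ⟨R, hR⟩ := hK.1.isBounded.subset_closedBall 0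
  set g : sphere (0 : EuclideanSpace ℝ (Fin n)) 1 × Ioi (0:ℝ) → ℝ :=
    fun p => K.indicator f ((p.2 : ℝ) • (p.1 : EuclideanSpace ℝ (Fin n))) with hg
  have hgm : Measurable g := by
    apply (hfm.indicator hKmeas).comp
    exact ((continuous_subtype_val.comp continuous_snd).smul
      (continuous_subtype_val.comp continuous_fst)).measurable
  have hgint : Integrable g
      (((volume : Measure (EuclideanSpace ℝ (Fin n))).toSphere).prod
        (Measure.volumeIoiPow (n - 1))) := by
    set s : Set (sphere (0 : EuclideanSpace ℝ (Fin n)) 1 × Ioi (0:ℝ)) :=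
      univ ×ˢ (Subtype.val ⁻¹' Iic R) with hs
    have htm : MeasurableSet (Subtype.val ⁻¹' Iic R : Set (Ioi (0:ℝ))) :=
      measurable_subtype_coe measurableSet_Iic
    have hsm : MeasurableSet s := MeasurableSet.univ.prod htm
    refine Integrable.mono' (g := s.indicator fun _ => C) ?_ hgm.aestronglyMeasurable ?_
    · rw [integrable_indicator_iff hsm]
      refine integrableOn_const (ne_of_lt ?_)
      rw [hs, Measure.prod_prod]
      refine ENNReal.mul_lt_top (measure_lt_top _ _) ?_
      have hsubset : (Subtype.val ⁻¹' Iic R : Set (Ioi (0:ℝ))) ⊆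
          Iio (⟨max R 0 + 1, mem_Ioi.2 (by positivity)⟩ : Ioi (0:ℝ)) := by
        intro r hr
        have hr' : (r : ℝ) ≤ R := hr
        have : (r : ℝ) < max R 0 + 1 :=
          lt_of_le_of_lt (le_trans hr' (le_max_left R 0)) (lt_add_one _)
        exact this
      calc (Measure.volumeIoiPow (n-1)) (Subtype.val ⁻¹' Iic R)
          ≤ (Measure.volumeIoiPow (n-1)) (Iio (⟨max R 0 + 1, mem_Ioi.2 (by positivity)⟩ : Ioi (0:ℝ))) :=
            measure_mono hsubset
        _ < ⊤ := by rw [Measure.volumeIoiPow_apply_Iio]; exact ENNReal.ofReal_lt_top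
    · refine Filter.Eventually.of_forall fun p => ?_
      by_cases hp : (p.2 : ℝ) ≤ R
      · have hmem : p ∈ s := ⟨mem_univ _, hp⟩
        rw [indicator_of_mem hmem]
        by_cases hmemK : ((p.2 : ℝ) • (p.1 : EuclideanSpace ℝ (Fin n))) ∈ K
        · have hne : ((p.2 : ℝ) • (p.1 : EuclideanSpace ℝ (Fin n))) ≠ 0 :=
            smul_ne_zero (ne_of_gt p.2.2) (ne_of_mem_sphere p.1.2 one_ne_zero)
          rw [hg]; simp only [indicator_of_mem hmemK]
          exact hbound _ hne
        · rw [hg]; simp only [indicator_of_notMem hmemK]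
          simpa using hC0
      · have hnotK : ((p.2 : ℝ) • (p.1 : EuclideanSpace ℝ (Fin n))) ∉ K := by
          intro hmemK
          have h2 := hR hmemK
          rw [mem_closedBall_zero_iff, norm_smul, Real.norm_eq_abs, abs_of_pos p.2.2,
            mem_sphere_zero_iff_norm.1 p.1.2, mul_one] at h2
          exact hp h2
        have hps : p ∉ s := fun hps => hp hps.2
        rw [indicator_of_notMem hps, hg]
        simp only [indicator_of_notMem hnotK]
        simp
  have hnt := (volume : Measure (EuclideanSpace ℝ (Fin n))).measurePreserving_homeomorphUnitSphereProd
  rw [hdim] at hnt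
  have inner : ∀ u : sphere (0 : EuclideanSpace ℝ (Fin n)) 1,
      ∫ r : Ioi (0:ℝ), g (u, r) ∂(Measure.volumeIoiPow (n - 1)) =
        f ↑u * ((radialFn K ↑u) ^ n / n) := by
    intro u
    have hu0 : (u : EuclideanSpace ℝ (Fin n)) ≠ 0 := ne_of_mem_sphere u.2 one_ne_zero
    have hρ0 : 0 ≤ radialFn K ↑u := radialFn_nonneg hK hu0
    have hmeasw : Measurable fun r : Ioi (0:ℝ) => (r.1 ^ (n-1)).toNNReal :=
      (measurable_subtype_coe.pow_const _).real_toNNReal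
    have h1 : n - 1 + 1 = n := Nat.succ_pred_eq_of_pos hn
    have h2 : ((n - 1 : ℕ) : ℝ) + 1 = (n : ℝ) := by exact_mod_cast congrArg (Nat.cast (R := ℝ)) h1
    calc ∫ r : Ioi (0:ℝ), g (u, r) ∂(Measure.volumeIoiPow (n - 1))
        = ∫ r : Ioi (0:ℝ), ((r.1 ^ (n-1)).toNNReal : ℝ≥0) • g (u, r)
            ∂(Measure.comap Subtype.val volume) := by
          simp only [Measure.volumeIoiPow, ENNReal.ofReal]
          rw [integral_withDensity_eq_integral_smul hmeasw]
      _ = ∫ r in Ioi (0:ℝ), ((r ^ (n-1)).toNNReal : ℝ≥0) •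
            K.indicator f (r • (u : EuclideanSpace ℝ (Fin n))) ∂volume :=
          integral_subtype_comap measurableSet_Ioi
            (fun r : ℝ => ((r ^ (n-1)).toNNReal : ℝ≥0) •
              K.indicator f (r • (u : EuclideanSpace ℝ (Fin n))))
      _ = ∫ r in Ioi (0:ℝ),
            (Ioc (0:ℝ) (radialFn K ↑u)).indicator (fun r => r ^ (n-1) * f ↑u) r ∂volume := by
          refine setIntegral_congr_fun measurableSet_Ioi fun r hr => ?_
          have hrpos : (0:ℝ) < r := hr
          rw [NNReal.smul_def, Real.coe_toNNReal _ (pow_nonneg hrpos.le _), smul_eq_mul]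
          by_cases hle : r ≤ radialFn K ↑u
          · have hmemK : r • (u : EuclideanSpace ℝ (Fin n)) ∈ K :=
              ((radialFn_mem_iff hK hu0).2 ⟨hrpos.le, hle⟩).2
            rw [indicator_of_mem hmemK, indicator_of_mem (mem_Ioc.2 ⟨hrpos, hle⟩),
              hhom r hrpos ↑u hu0]
          · have hnot : r • (u : EuclideanSpace ℝ (Fin n)) ∉ K := fun hm =>
              hle (((radialFn_mem_iff hK hu0).1 ⟨hrpos.le, hm⟩).2)
            rw [indicator_of_notMem hnot,
              indicator_of_notMem (fun hm => hle (mem_Ioc.1 hm).2), mul_zero]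
      _ = ∫ r in Ioc (0:ℝ) (radialFn K ↑u), r ^ (n-1) * f ↑u ∂volume := by
          rw [integral_indicator measurableSet_Ioc, Measure.restrict_restrict measurableSet_Ioc,
            inter_eq_self_of_subset_left Ioc_subset_Ioi_self]
      _ = (∫ r in Ioc (0:ℝ) (radialFn K ↑u), r ^ (n-1) ∂volume) * f ↑u :=
          integral_mul_const _ _
      _ = ((radialFn K ↑u) ^ n / n) * f ↑u := by
          rw [← intervalIntegral.integral_of_le hρ0, integral_pow, h1, h2,
            zero_pow hn.ne', sub_zero]
      _ = f ↑u * ((radialFn K ↑u) ^ n / n) := mul_comm _ _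
  calc ∫ u, f ↑u * ((radialFn K ↑u) ^ n / n) ∂(sphereMeasure n)
      = ∫ u, (∫ r : Ioi (0:ℝ), g (u, r) ∂(Measure.volumeIoiPow (n - 1)))
          ∂((volume : Measure (EuclideanSpace ℝ (Fin n))).toSphere) := by
        rw [sphereMeasure]
        exact (integral_congr_ae (Filter.Eventually.of_forall fun u => (inner u))).symm
    _ = ∫ p, g p ∂(((volume : Measure (EuclideanSpace ℝ (Fin n))).toSphere).prod
          (Measure.volumeIoiPow (n - 1))) := (integral_prod g hgint).symm
    _ = ∫ x : ({0}ᶜ : Set (EuclideanSpace ℝ (Fin n))), K.indicator f ↑x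
          ∂((volume : Measure (EuclideanSpace ℝ (Fin n))).comap Subtype.val) := by
        rw [← hnt.integral_comp (Homeomorph.measurableEmbedding _) g]
        refine integral_congr_ae (Filter.Eventually.of_forall fun x => ?_)
        show g (homeomorphUnitSphereProd (EuclideanSpace ℝ (Fin n)) x) = K.indicator f ↑x
        rw [hg]
        simp only [homeomorphUnitSphereProd_apply_fst_coe, homeomorphUnitSphereProd_apply_snd_coe]
        rw [smul_inv_smul₀ (norm_ne_zero_iff.2 x.2)]
    _ = ∫ x in ({0}ᶜ : Set (EuclideanSpace ℝ (Fin n))), K.indicator f x ∂volume :=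
        integral_subtype_comap (measurableSet_singleton 0).compl _
    _ = ∫ x, K.indicator f x ∂(volume : Measure (EuclideanSpace ℝ (Fin n))) := by
        rw [restrict_compl_singleton]
    _ = ∫ x in K, f x ∂(volume : Measure (EuclideanSpace ℝ (Fin n))) :=
        integral_indicator hKmeas

lemma ratio_continuousOn {K L : Set (EuclideanSpace ℝ (Fin n))} (hK : IsStarBody K)
    (hL : IsStarBody L) {φ : ℝ → ℝ} (hφ : ContinuousOn φ (Ioi (0:ℝ))) :
    ContinuousOn (fun x => φ (radialFn K x / radialFn L x))
      ({0}ᶜ : Set (EuclideanSpace ℝ (Fin n))) := by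
  refine hφ.comp (ContinuousOn.div (radialFn_continuousOn hK) (radialFn_continuousOn hL)
    fun x hx => ?_) fun x hx => ?_
  · have hx' : x ≠ 0 := hx
    exact (radialFn_pos hL hx').ne'
  · have hx' : x ≠ 0 := hx
    exact div_pos (radialFn_pos hK hx') (radialFn_pos hL hx')

lemma ratio_hom {K L : Set (EuclideanSpace ℝ (Fin n))} (hK : IsStarBody K)
    (hL : IsStarBody L) (φ : ℝ → ℝ) :
    ∀ c : ℝ, 0 < c → ∀ x : EuclideanSpace ℝ (Fin n), x ≠ 0 →
      (fun x => φ (radialFn K x / radialFn L x)) (c • x) =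
        (fun x => φ (radialFn K x / radialFn L x)) x := by
  intro c hc x hx
  have hb : radialFn L x ≠ 0 := (radialFn_pos hL hx).ne'
  simp only
  rw [radialFn_smul hK hx hc, radialFn_smul hL hx hc]
  congr 1
  field_simp

/-- For star bodies `K, L` about the origin, `φ ∈ Φ`, and
`T ∈ GL(n)`: `Ṽ_φ(TK, L) = |det T| · Ṽ_φ(K, T⁻¹L)`. -/
theorem dualOrliczMixedVol_linear_map
    (n : ℕ) (hn : 0 < n) (K L : Set (EuclideanSpace ℝ (Fin n)))
    (hK : IsStarBody K) (hL : IsStarBody L) (φ : ℝ → ℝ)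
    (hφconv : ConvexOn ℝ (Ici (0 : ℝ)) φ)
    (hφmono : StrictMonoOn φ (Ici (0 : ℝ)))
    (hφ0 : φ 0 = 0)
    (T : EuclideanSpace ℝ (Fin n) ≃ₗ[ℝ] EuclideanSpace ℝ (Fin n)) :
    dualOrliczMixedVol n φ (T '' K) L =
      |LinearMap.det (T : EuclideanSpace ℝ (Fin n) →ₗ[ℝ] EuclideanSpace ℝ (Fin n))| *
        dualOrliczMixedVol n φ K (T.symm '' L) := by
  have hφc : ContinuousOn φ (Ioi (0:ℝ)) := by
    have h := hφconv.continuousOn_interior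
    rwa [interior_Ici] at h
  have hTK : IsStarBody (T '' K) := isStarBody_image hK T
  have hTL : IsStarBody (T.symm '' L) := isStarBody_image hL T.symm
  have hKmeas : MeasurableSet K := hK.1.isClosed.measurableSet
  have key1 : dualOrliczMixedVol n φ (T '' K) L =
      ∫ x in T '' K, φ (radialFn (T '' K) x / radialFn L x) ∂volume := by
    unfold dualOrliczMixedVol
    exact polar_integral hn hTK (ratio_continuousOn hTK hL hφc) (ratio_hom hTK hL φ)
  have key2 : dualOrliczMixedVol n φ K (T.symm '' L) =
      ∫ y in K, φ (radialFn K y / radialFn (T.symm '' L) y) ∂volume := by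
    unfold dualOrliczMixedVol
    exact polar_integral hn hK (ratio_continuousOn hK hTL hφc) (ratio_hom hK hTL φ)
  rw [key1, key2, setIntegral_image_linearEquiv T hKmeas _]
  congr 1
  refine integral_congr_ae (Filter.Eventually.of_forall fun y => ?_)
  simp only
  have e1 : radialFn (T '' K) (T y) = radialFn K y := by
    rw [radialFn_image, T.symm_apply_apply]
  have e2 : radialFn (T.symm '' L) y = radialFn L (T y) := by
    rw [radialFn_image, T.symm_symm]
  rw [e1, e2]
end
end

section
/- Let K be a star body about the origin in ℝ^n and φ ∈ Φ. Then the Orlicz-Legendre ellipsoid satisfies V(L_φ K) ≥ V(K), with equality if and only if K is an origin-symmetric ellipsoid. -/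
open MeasureTheory Metric Set

noncomputable section

/-- The normalized dual conical measure `dV_K^* = ρ_K^n/(n V(K)) dS`. -/
def normDualConical (n : ℕ) (K : Set (EuclideanSpace ℝ (Fin n))) :
    Measure (sphere (0 : EuclideanSpace ℝ (Fin n)) 1) :=
  (sphereMeasure n).withDensity fun u =>
    ENNReal.ofReal ((radialFn K u) ^ n / (n * (volume K).toReal))

/-- `O_φ(K,L) = inf {t > 0 : ∫ φ (ρ_K/(t ρ_L)) dV_K^* ≤ φ 1}`
(equivalently, `φ⁻¹ (∫ φ (ρ_K/(t ρ_L)) dV_K^*) ≤ 1`). -/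
def Ofun (n : ℕ) (φ : ℝ → ℝ) (K L : Set (EuclideanSpace ℝ (Fin n))) : ℝ :=
  sInf {t : ℝ | 0 < t ∧
    ∫ u, φ (radialFn K u / (t * radialFn L u)) ∂(normDualConical n K) ≤ φ 1}

/-- An origin-symmetric (nondegenerate) ellipsoid: the image of the closed unit
ball under an invertible linear map. -/
def IsEllipsoid {n : ℕ} (E : Set (EuclideanSpace ℝ (Fin n))) : Prop :=
  ∃ T : EuclideanSpace ℝ (Fin n) ≃ₗ[ℝ] EuclideanSpace ℝ (Fin n),
    E = T '' Metric.closedBall 0 1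

/-! ### Helper lemmas -/

section Helpers

variable {n : ℕ}

/-- Pre-star-body: compact, `0` in interior, star-shaped. -/
structure PreBody (A : Set (EuclideanSpace ℝ (Fin n))) : Prop where
  comp : IsCompact A
  int0 : (0 : EuclideanSpace ℝ (Fin n)) ∈ interior A
  star : ∀ x ∈ A, ∀ t : ℝ, t ∈ Icc (0 : ℝ) 1 → t • x ∈ A

namespace PreBody

variable {A : Set (EuclideanSpace ℝ (Fin n))} (hA : PreBody A)
  (u : sphere (0 : EuclideanSpace ℝ (Fin n)) 1)
include hA

theorem zero_mem : (0 : EuclideanSpace ℝ (Fin n)) ∈ A := interior_subset hA.int0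

theorem radial_set_eq : ∃ ρ : ℝ, 0 < ρ ∧ radialFn A u = ρ ∧
    ∀ r : ℝ, 0 ≤ r → (r • (u : EuclideanSpace ℝ (Fin n)) ∈ A ↔ r ≤ ρ) := by
  obtain ⟨R, hR⟩ := hA.comp.isBounded.subset_closedBall 0
  have hu : ‖(u : EuclideanSpace ℝ (Fin n))‖ = 1 := by
    simpa [mem_sphere_zero_iff_norm] using u.2
  set S : Set ℝ := {r : ℝ | 0 ≤ r ∧ r • (u : EuclideanSpace ℝ (Fin n)) ∈ A} with hS
  have h0S : (0 : ℝ) ∈ S := ⟨le_rfl, by simpa using hA.zero_mem⟩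
  have hbdd : BddAbove S := by
    refine ⟨R, fun r hr => ?_⟩
    have := hR hr.2
    have hnorm : ‖r • (u : EuclideanSpace ℝ (Fin n))‖ = r := by
      rw [norm_smul, hu, mul_one, Real.norm_eq_abs, abs_of_nonneg hr.1]
    simpa [mem_closedBall, dist_eq_norm, hnorm] using this
  have hclosed : IsClosed S := by
    have : S = Ici (0:ℝ) ∩ (fun r : ℝ => r • (u : EuclideanSpace ℝ (Fin n))) ⁻¹' A := by
      ext r; simp [hS, Set.mem_setOf_eq, and_comm]
    rw [this]
    exact isClosed_Ici.inter (hA.comp.isClosed.preimage (by fun_prop))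
  have hmem : sSup S ∈ S := hclosed.csSup_mem ⟨0, h0S⟩ hbdd
  have hpos : 0 < sSup S := by
    obtain ⟨ε, hε, hball⟩ := Metric.mem_nhds_iff.1 (mem_interior_iff_mem_nhds.1 hA.int0)
    have hmem2 : ε / 2 ∈ S := by
      refine ⟨by positivity, hball ?_⟩
      simp only [mem_ball, dist_eq_norm, sub_zero, norm_smul, hu, mul_one,
        Real.norm_eq_abs, abs_of_nonneg (by positivity : (0:ℝ) ≤ ε / 2)]
      linarith
    exact lt_of_lt_of_le (by positivity) (le_csSup hbdd hmem2)
  refine ⟨sSup S, hpos, rfl, fun r hr => ⟨fun h => le_csSup hbdd ⟨hr, h⟩, fun h => ?_⟩⟩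
  have hsmem : sSup S • (u : EuclideanSpace ℝ (Fin n)) ∈ A := hmem.2
  have := hA.star _ hsmem (r / sSup S) ⟨by positivity, by
    rw [div_le_one hpos]; exact h⟩
  rwa [smul_smul, div_mul_cancel₀ _ hpos.ne'] at this

theorem radial_pos : 0 < radialFn A u := by
  obtain ⟨ρ, hρ, heq, _⟩ := hA.radial_set_eq u
  rw [heq]; exact hρ

theorem smul_mem_iff {r : ℝ} (hr : 0 ≤ r) :
    r • (u : EuclideanSpace ℝ (Fin n)) ∈ A ↔ r ≤ radialFn A u := by
  obtain ⟨ρ, hρ, heq, hiff⟩ := hA.radial_set_eq u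
  rw [heq]; exact hiff r hr

theorem vol_ne_zero : volume A ≠ 0 := by
  have := Measure.measure_pos_of_nonempty_interior volume ⟨0, hA.int0⟩
  exact this.ne'

theorem vol_ne_top : volume A ≠ ⊤ := hA.comp.measure_lt_top.ne

theorem volR_pos : 0 < (volume A).toReal :=
  ENNReal.toReal_pos hA.vol_ne_zero hA.vol_ne_top

end PreBody

/-- Two pre-bodies with equal radial functions coincide. -/
theorem PreBody.eq_of_radial_eq {A B : Set (EuclideanSpace ℝ (Fin n))}
    (hA : PreBody A) (hB : PreBody B)
    (h : ∀ u : sphere (0 : EuclideanSpace ℝ (Fin n)) 1, radialFn A u = radialFn B u) :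
    A = B := by
  have key : ∀ (A B : Set (EuclideanSpace ℝ (Fin n))), PreBody A → PreBody B →
      (∀ u : sphere (0 : EuclideanSpace ℝ (Fin n)) 1, radialFn A u = radialFn B u) →
      A ⊆ B := by
    intro A B hA hB h x hx
    rcases eq_or_ne x 0 with rfl | hx0
    · exact hB.zero_mem
    · have hxnorm : ‖x‖ ≠ 0 := norm_ne_zero_iff.2 hx0
      set u : sphere (0 : EuclideanSpace ℝ (Fin n)) 1 := ⟨‖x‖⁻¹ • x, by
        simp [mem_sphere_zero_iff_norm, norm_smul, inv_mul_cancel₀ hxnorm]⟩ with hu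
      have hxu : ‖x‖ • (u : EuclideanSpace ℝ (Fin n)) = x := by
        simp [hu, smul_smul, mul_inv_cancel₀ hxnorm]
      have h1 : ‖x‖ ≤ radialFn A u := by
        rw [← hA.smul_mem_iff u (norm_nonneg x), hxu]; exact hx
      have h2 : ‖x‖ ≤ radialFn B u := by rw [← h u]; exact h1
      have := (hB.smul_mem_iff u (norm_nonneg x)).2 h2
      rwa [hxu] at this
  exact le_antisymm (key A B hA hB h) (key B A hB hA fun u => (h u).symm)

theorem IsEllipsoid.preBody {A : Set (EuclideanSpace ℝ (Fin n))} (h : IsEllipsoid A) :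
    PreBody A := by
  obtain ⟨T, hT⟩ := h
  refine ⟨?_, ?_, ?_⟩
  · rw [hT]; exact (isCompact_closedBall 0 1).image T.toContinuousLinearEquiv.continuous
  · rw [hT]
    have hopen : IsOpen (⇑T '' Metric.ball 0 1) := by
      have := T.toContinuousLinearEquiv.toHomeomorph.isOpenMap
      simpa using this _ Metric.isOpen_ball
    have h0 : (0 : EuclideanSpace ℝ (Fin n)) ∈ ⇑T '' Metric.ball 0 1 := ⟨0, by simp, by simp⟩
    exact interior_maximal (Set.image_mono ball_subset_closedBall) hopen h0
  · rw [hT]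
    have hconv : Convex ℝ (⇑T '' Metric.closedBall 0 1) := by
      simpa using (convex_closedBall (0 : EuclideanSpace ℝ (Fin n)) 1).linear_image T.toLinearMap
    intro x hx t ht
    have h0 : (0 : EuclideanSpace ℝ (Fin n)) ∈ ⇑T '' Metric.closedBall 0 1 :=
      ⟨0, by simp, by simp⟩
    have hseg : t • x ∈ segment ℝ (0 : EuclideanSpace ℝ (Fin n)) x :=
      ⟨1 - t, t, by linarith [ht.2], ht.1, by ring, by simp⟩
    exact hconv.segment_subset h0 hx hseg

theorem IsEllipsoid.radial_eq {A : Set (EuclideanSpace ℝ (Fin n))}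
    (T : EuclideanSpace ℝ (Fin n) ≃ₗ[ℝ] EuclideanSpace ℝ (Fin n))
    (hT : A = T '' Metric.closedBall 0 1)
    (u : sphere (0 : EuclideanSpace ℝ (Fin n)) 1) :
    radialFn A u = ‖T.symm (u : EuclideanSpace ℝ (Fin n))‖⁻¹ := by
  have hu : ‖(u : EuclideanSpace ℝ (Fin n))‖ = 1 := by
    simpa [mem_sphere_zero_iff_norm] using u.2
  have hu0 : (u : EuclideanSpace ℝ (Fin n)) ≠ 0 := by
    intro h; rw [h] at hu; simp at hu
  have hc : ‖T.symm (u : EuclideanSpace ℝ (Fin n))‖ ≠ 0 := by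
    simp only [norm_ne_zero_iff]
    exact fun h => hu0 (by simpa using congrArg T h)
  have hcpos : 0 < ‖T.symm (u : EuclideanSpace ℝ (Fin n))‖ :=
    lt_of_le_of_ne (norm_nonneg _) (Ne.symm hc)
  have hset : {r : ℝ | 0 ≤ r ∧ r • (u : EuclideanSpace ℝ (Fin n)) ∈ A} =
      Icc 0 ‖T.symm (u : EuclideanSpace ℝ (Fin n))‖⁻¹ := by
    ext r
    simp only [Set.mem_setOf_eq, mem_Icc, hT]
    constructor
    · rintro ⟨hr, y, hy, hTy⟩
      refine ⟨hr, ?_⟩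
      have hyr : T.symm (r • (u : EuclideanSpace ℝ (Fin n))) = y := by
        rw [← hTy]; simp
      have hnorm : r * ‖T.symm (u : EuclideanSpace ℝ (Fin n))‖ ≤ 1 := by
        calc r * ‖T.symm (u : EuclideanSpace ℝ (Fin n))‖
            = ‖T.symm (r • (u : EuclideanSpace ℝ (Fin n)))‖ := by
              rw [_root_.map_smul, norm_smul, Real.norm_eq_abs, abs_of_nonneg hr]
          _ = ‖y‖ := by rw [hyr]
          _ ≤ 1 := mem_closedBall_zero_iff.1 hy
      rw [← one_div]
      exact (le_div_iff₀ hcpos).2 hnorm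
    · rintro ⟨hr, hle⟩
      refine ⟨hr, T.symm (r • (u : EuclideanSpace ℝ (Fin n))), ?_, by simp⟩
      rw [mem_closedBall_zero_iff, _root_.map_smul, norm_smul, Real.norm_eq_abs,
        abs_of_nonneg hr]
      calc r * ‖T.symm (u : EuclideanSpace ℝ (Fin n))‖
          ≤ ‖T.symm (u : EuclideanSpace ℝ (Fin n))‖⁻¹ * ‖T.symm (u : EuclideanSpace ℝ (Fin n))‖ :=
            mul_le_mul_of_nonneg_right hle (norm_nonneg _)
        _ = 1 := inv_mul_cancel₀ hc
  rw [radialFn, hset, csSup_Icc (by positivity)]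

theorem IsEllipsoid.radial_continuous {A : Set (EuclideanSpace ℝ (Fin n))} (h : IsEllipsoid A) :
    Continuous fun u : sphere (0 : EuclideanSpace ℝ (Fin n)) 1 => radialFn A u := by
  obtain ⟨T, hT⟩ := h
  have heq : ∀ u : sphere (0 : EuclideanSpace ℝ (Fin n)) 1,
      radialFn A u = ‖T.symm (u : EuclideanSpace ℝ (Fin n))‖⁻¹ :=
    fun u => IsEllipsoid.radial_eq T hT u
  simp only [heq]
  have hcont : Continuous fun u : sphere (0 : EuclideanSpace ℝ (Fin n)) 1 =>
      ‖T.symm (u : EuclideanSpace ℝ (Fin n))‖ :=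
    (T.symm.toContinuousLinearEquiv.continuous.comp continuous_subtype_val).norm
  refine hcont.inv₀ fun u => ?_
  have hu : ‖(u : EuclideanSpace ℝ (Fin n))‖ = 1 := by
    simpa [mem_sphere_zero_iff_norm] using u.2
  have hu0 : (u : EuclideanSpace ℝ (Fin n)) ≠ 0 := by
    intro h; rw [h] at hu; simp at hu
  simp only [norm_ne_zero_iff]
  exact fun h => hu0 (by simpa using congrArg T h)

theorem volumeIoiPow_Iic (hn : 0 < n) (x : Ioi (0:ℝ)) :
    Measure.volumeIoiPow (n-1) (Iic x) = ENNReal.ofReal ((x:ℝ)^n / n) := by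
  have hsing : Measure.volumeIoiPow (n-1) {x} = 0 := by
    rw [Measure.volumeIoiPow, withDensity_apply _ (measurableSet_singleton x)]
    have hc : (Measure.comap Subtype.val volume : Measure (Ioi (0:ℝ))) {x} = 0 := by
      rw [MeasurableEmbedding.comap_apply (MeasurableEmbedding.subtype_coe measurableSet_Ioi)]
      simp [Set.image_singleton]
    exact setLIntegral_measure_zero _ _ hc
  have hIic : Measure.volumeIoiPow (n-1) (Iic x) = Measure.volumeIoiPow (n-1) (Iio x) := by
    refine le_antisymm ?_ (measure_mono Iio_subset_Iic_self)
    calc Measure.volumeIoiPow (n-1) (Iic x) = Measure.volumeIoiPow (n-1) (insert x (Iio x)) := by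
          rw [Iio_insert]
      _ ≤ Measure.volumeIoiPow (n-1) {x} + Measure.volumeIoiPow (n-1) (Iio x) := by
          rw [insert_eq]; exact measure_union_le _ _
      _ = Measure.volumeIoiPow (n-1) (Iio x) := by rw [hsing, zero_add]
  rw [hIic, Measure.volumeIoiPow_apply_Iio]
  congr 1
  rw [Nat.sub_add_cancel hn, Nat.cast_pred hn]
  ring_nf

theorem PreBody.lintegral_radial_pow (hn : 0 < n) {A : Set (EuclideanSpace ℝ (Fin n))}
    (hA : PreBody A) :
    ∫⁻ u, ENNReal.ofReal ((radialFn A u) ^ n / n) ∂(sphereMeasure n) = volume A := by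
  have hdim : Module.finrank ℝ (EuclideanSpace ℝ (Fin n)) = n := finrank_euclideanSpace_fin
  haveI : Nontrivial (EuclideanSpace ℝ (Fin n)) :=
    Module.nontrivial_of_finrank_pos (R := ℝ) (by rw [hdim]; exact hn)
  have mp := Measure.measurePreserving_homeomorphUnitSphereProd
    (volume : Measure (EuclideanSpace ℝ (Fin n)))
  rw [hdim] at mp
  set T : Set (sphere (0 : EuclideanSpace ℝ (Fin n)) 1 × Ioi (0:ℝ)) :=
    {p | ((p.2 : ℝ)) • (p.1 : EuclideanSpace ℝ (Fin n)) ∈ A} with hT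
  have hTmeas : MeasurableSet T := by
    have hc : Continuous fun p : sphere (0 : EuclideanSpace ℝ (Fin n)) 1 × Ioi (0:ℝ) =>
        ((p.2 : ℝ)) • (p.1 : EuclideanSpace ℝ (Fin n)) := by fun_prop
    exact hA.comp.isClosed.measurableSet.preimage hc.measurable
  have hpre : (homeomorphUnitSphereProd (EuclideanSpace ℝ (Fin n))) ⁻¹' T
      = Subtype.val ⁻¹' A := by
    ext x
    have hx : (x : EuclideanSpace ℝ (Fin n)) ≠ 0 := x.2
    simp only [hT, Set.mem_preimage, Set.mem_setOf_eq,
      homeomorphUnitSphereProd_apply_snd_coe, homeomorphUnitSphereProd_apply_fst_coe]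
    rw [smul_inv_smul₀ (norm_ne_zero_iff.2 hx)]
  have step1 : (volume.comap (Subtype.val :
      ({0}ᶜ : Set (EuclideanSpace ℝ (Fin n))) → EuclideanSpace ℝ (Fin n)))
      (Subtype.val ⁻¹' A) = volume A := by
    rw [MeasurableEmbedding.comap_apply
      (MeasurableEmbedding.subtype_coe (measurableSet_singleton
        (0 : EuclideanSpace ℝ (Fin n))).compl)]
    rw [Set.image_preimage_eq_inter_range, Subtype.range_coe, ← Set.diff_eq,
      measure_diff_null (measure_singleton _)]
  have step2 : (volume.comap (Subtype.val :
      ({0}ᶜ : Set (EuclideanSpace ℝ (Fin n))) → EuclideanSpace ℝ (Fin n)))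
      ((homeomorphUnitSphereProd (EuclideanSpace ℝ (Fin n))) ⁻¹' T)
      = ((volume : Measure (EuclideanSpace ℝ (Fin n))).toSphere.prod
        (Measure.volumeIoiPow (n-1))) T :=
    mp.measure_preimage hTmeas.nullMeasurableSet
  have step3 : ((volume : Measure (EuclideanSpace ℝ (Fin n))).toSphere.prod
      (Measure.volumeIoiPow (n-1))) T
      = ∫⁻ u, Measure.volumeIoiPow (n-1) (Prod.mk u ⁻¹' T)
          ∂(volume : Measure (EuclideanSpace ℝ (Fin n))).toSphere :=
    Measure.prod_apply hTmeas
  have hsec : ∀ u : sphere (0 : EuclideanSpace ℝ (Fin n)) 1, Prod.mk u ⁻¹' T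
      = Iic (⟨radialFn A u, hA.radial_pos u⟩ : Ioi (0:ℝ)) := by
    intro u
    ext r
    simp only [hT, Set.mem_preimage, Set.mem_setOf_eq, Set.mem_Iic, ← Subtype.coe_le_coe]
    exact hA.smul_mem_iff u r.2.le
  calc ∫⁻ u, ENNReal.ofReal ((radialFn A u) ^ n / n) ∂(sphereMeasure n)
      = ∫⁻ u, Measure.volumeIoiPow (n-1) (Prod.mk u ⁻¹' T)
          ∂(volume : Measure (EuclideanSpace ℝ (Fin n))).toSphere := by
        refine lintegral_congr fun u => ?_
        rw [hsec u, volumeIoiPow_Iic hn]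
    _ = volume A := by rw [← step3, ← step2, hpre, step1]

end Helpers

section Analytic

open scoped NNReal ENNReal Pointwise

variable {n : ℕ}

/-- Continuous real functions on the (compact) sphere are integrable. -/
theorem cont_integrable {μ : Measure (sphere (0 : EuclideanSpace ℝ (Fin n)) 1)}
    [IsFiniteMeasure μ] {f : sphere (0 : EuclideanSpace ℝ (Fin n)) 1 → ℝ}
    (hf : Continuous f) : Integrable f μ :=
  hf.integrable_of_hasCompactSupport
    (IsCompact.of_isClosed_subset isCompact_univ (isClosed_tsupport f) (subset_univ _))

theorem PreBody.prob (hn : 0 < n) {A : Set (EuclideanSpace ℝ (Fin n))} (hA : PreBody A) :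
    IsProbabilityMeasure (normDualConical n A) := by
  constructor
  set V := (volume A).toReal with hV
  rw [normDualConical, withDensity_apply _ MeasurableSet.univ, Measure.restrict_univ]
  have hVpos : 0 < V := hA.volR_pos
  have heq : ∀ u : sphere (0 : EuclideanSpace ℝ (Fin n)) 1,
      ENNReal.ofReal ((radialFn A u) ^ n / (n * V))
        = ENNReal.ofReal ((radialFn A u) ^ n / n) * ENNReal.ofReal V⁻¹ := by
    intro u
    have hρ := (hA.radial_pos u).le
    rw [← ENNReal.ofReal_mul (by positivity)]
    congr 1
    rw [← div_div, div_eq_mul_inv]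
  simp only [← hV, heq]
  rw [lintegral_mul_const' _ _ ENNReal.ofReal_ne_top, hA.lintegral_radial_pow hn]
  rw [show volume A = ENNReal.ofReal V by rw [hV, ENNReal.ofReal_toReal hA.vol_ne_top]]
  rw [← ENNReal.ofReal_mul hVpos.le, mul_inv_cancel₀ hVpos.ne', ENNReal.ofReal_one]

theorem integral_normDual {A : Set (EuclideanSpace ℝ (Fin n))} (hA : PreBody A)
    (hcont : Continuous fun u : sphere (0 : EuclideanSpace ℝ (Fin n)) 1 => radialFn A u)
    (g : sphere (0 : EuclideanSpace ℝ (Fin n)) 1 → ℝ) :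
    ∫ u, g u ∂(normDualConical n A)
      = ∫ u, ((radialFn A u) ^ n / (n * (volume A).toReal)) * g u ∂(sphereMeasure n) := by
  rw [normDualConical]
  have hmeas : Measurable fun u : sphere (0 : EuclideanSpace ℝ (Fin n)) 1 =>
      Real.toNNReal ((radialFn A u) ^ n / (n * (volume A).toReal)) :=
    ((hcont.pow _).div_const _).measurable.real_toNNReal
  have hdens : (fun u : sphere (0 : EuclideanSpace ℝ (Fin n)) 1 =>
      ENNReal.ofReal ((radialFn A u) ^ n / (n * (volume A).toReal)))
      = fun u : sphere (0 : EuclideanSpace ℝ (Fin n)) 1 =>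
        ((Real.toNNReal ((radialFn A u) ^ n / (n * (volume A).toReal)) : ℝ≥0) : ℝ≥0∞) :=
    rfl
  rw [hdens, integral_withDensity_eq_integral_smul hmeas g]
  refine integral_congr_ae (Filter.EventuallyEq.of_eq (funext fun u => ?_))
  have hρ := (hA.radial_pos u).le
  rw [NNReal.smul_def, Real.coe_toNNReal _ (by positivity), smul_eq_mul]

theorem PreBody.integral_radial_pow (hn : 0 < n) {A : Set (EuclideanSpace ℝ (Fin n))}
    (hA : PreBody A)
    (hcont : Continuous fun u : sphere (0 : EuclideanSpace ℝ (Fin n)) 1 => radialFn A u) :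
    ∫ u, (radialFn A u) ^ n ∂(sphereMeasure n) = n * (volume A).toReal := by
  have h1 : ∫ u, (radialFn A u) ^ n / n ∂(sphereMeasure n) = (volume A).toReal := by
    rw [integral_eq_lintegral_of_nonneg_ae (f := fun u : sphere (0 : EuclideanSpace ℝ (Fin n)) 1 => (radialFn A u) ^ n / n)
      (Filter.Eventually.of_forall fun u => by
        have := (hA.radial_pos u).le; positivity)
      ((hcont.pow _ |>.div_const _).aestronglyMeasurable),
      hA.lintegral_radial_pow hn]
  have h2 : ∫ u, (radialFn A u) ^ n / n ∂(sphereMeasure n)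
      = (∫ u, (radialFn A u) ^ n ∂(sphereMeasure n)) / n := integral_div _ _
  rw [h1] at h2
  have hn' : (n:ℝ) ≠ 0 := Nat.cast_ne_zero.2 hn.ne'
  field_simp at h2
  linarith [h2]

/-- The spherical measure is positive on nonempty open sets. -/
theorem sphereMeasure_isOpenPos (hn : 0 < n) :
    (sphereMeasure n).IsOpenPosMeasure := by
  constructor
  intro U hU hUne
  rw [sphereMeasure, Measure.toSphere_apply' _ hU.measurableSet]
  have hdim : Module.finrank ℝ (EuclideanSpace ℝ (Fin n)) = n := finrank_euclideanSpace_fin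
  rw [hdim]
  set W : Set (EuclideanSpace ℝ (Fin n)) := Ioo (0:ℝ) 1 • (Subtype.val '' U) with hW
  obtain ⟨u, hu⟩ := hUne
  have hu1 : ‖(u : EuclideanSpace ℝ (Fin n))‖ = 1 := by
    simpa [mem_sphere_zero_iff_norm] using u.2
  have hu0 : (u : EuclideanSpace ℝ (Fin n)) ≠ 0 := by
    intro h; rw [h] at hu1; simp at hu1
  -- the point (1/2) • u belongs to W, and W contains an open set around it
  set V : Set (EuclideanSpace ℝ (Fin n)) :=
    Subtype.val '' ((homeomorphUnitSphereProd (EuclideanSpace ℝ (Fin n))) ⁻¹'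
      (U ×ˢ (Subtype.val ⁻¹' Ioo (0:ℝ) 1))) with hV
  have hVopen : IsOpen V := by
    refine (isOpen_compl_singleton).isOpenMap_subtype_val _ ?_
    exact (homeomorphUnitSphereProd _).continuous.isOpen_preimage _
      (hU.prod (isOpen_Ioo.preimage continuous_subtype_val))
  have hVW : V ⊆ W := by
    rintro x ⟨y, hy, rfl⟩
    rcases hy with ⟨h1, h2⟩
    have := congrArg Subtype.val
      ((homeomorphUnitSphereProd (EuclideanSpace ℝ (Fin n))).symm_apply_apply y)
    rw [homeomorphUnitSphereProd_symm_apply_coe] at this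
    refine ⟨_, h2, _, ⟨_, h1, rfl⟩, this⟩
  have hVne : V.Nonempty := by
    have hy0 : (2:ℝ)⁻¹ • (u : EuclideanSpace ℝ (Fin n)) ≠ 0 := by
      simp [hu0]
    refine ⟨(2:ℝ)⁻¹ • (u : EuclideanSpace ℝ (Fin n)), ⟨(2:ℝ)⁻¹ • (u : EuclideanSpace ℝ (Fin n)),
      hy0⟩, ?_, rfl⟩
    constructor
    · show (homeomorphUnitSphereProd _ _).1 ∈ U
      have : (homeomorphUnitSphereProd (EuclideanSpace ℝ (Fin n))
          ⟨(2:ℝ)⁻¹ • (u : EuclideanSpace ℝ (Fin n)), hy0⟩).1 = u := by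
        apply Subtype.ext
        rw [homeomorphUnitSphereProd_apply_fst_coe]
        rw [norm_smul, hu1]
        simp [smul_smul]
      rw [this]; exact hu
    · show ((homeomorphUnitSphereProd _ _).2 : ℝ) ∈ Ioo (0:ℝ) 1
      rw [homeomorphUnitSphereProd_apply_snd_coe, norm_smul, hu1]
      norm_num
  have hpos : (0:ℝ≥0∞) < volume W :=
    lt_of_lt_of_le (hVopen.measure_pos volume hVne) (measure_mono hVW)
  exact mul_ne_zero (by exact_mod_cast Nat.cast_ne_zero.2 hn.ne') hpos.ne'

end Analytic

section Main

open scoped NNReal ENNReal Pointwise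

variable {n : ℕ}

theorem phi_contOn {φ : ℝ → ℝ} (hφconv : ConvexOn ℝ (Ici (0:ℝ)) φ)
    (hφmono : StrictMonoOn φ (Ici (0:ℝ))) (hφ0 : φ 0 = 0) :
    ContinuousOn φ (Ici (0:ℝ)) := by
  have hIoi : ContinuousOn φ (Ioi (0:ℝ)) :=
    (hφconv.subset (Ioi_subset_Ici le_rfl) (convex_Ioi 0)).continuousOn isOpen_Ioi
  intro x hx
  rcases eq_or_lt_of_le (mem_Ici.1 hx) with heq | hxpos
  · subst heq
    have hf : ∀ᶠ y in nhdsWithin (0:ℝ) (Ici 0), 0 ≤ φ y := by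
      filter_upwards [self_mem_nhdsWithin] with y hy
      rw [← hφ0]
      exact hφmono.monotoneOn (mem_Ici.2 le_rfl) hy (mem_Ici.1 hy)
    have hft : ∀ᶠ y in nhdsWithin (0:ℝ) (Ici 0), φ y ≤ y * φ 1 := by
      filter_upwards [self_mem_nhdsWithin,
        mem_nhdsWithin_of_mem_nhds (Iic_mem_nhds zero_lt_one)] with y hy hy1
      have hconv := hφconv.2 (mem_Ici.2 zero_le_one) (mem_Ici.2 (le_refl (0:ℝ)))
        (mem_Ici.1 hy) (show (0:ℝ) ≤ 1 - y by simp only [sub_nonneg]; exact hy1)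
        (show y + (1 - y) = 1 by ring)
      simpa [hφ0] using hconv
    have hg0 : Filter.Tendsto (fun y : ℝ => y * φ 1) (nhdsWithin (0:ℝ) (Ici 0)) (nhds 0) := by
      have : Filter.Tendsto (fun y : ℝ => y * φ 1) (nhds (0:ℝ)) (nhds (0 * φ 1)) :=
        (continuous_id.mul continuous_const).tendsto 0
      rw [zero_mul] at this
      exact this.mono_left nhdsWithin_le_nhds
    have := squeeze_zero' hf hft hg0
    rw [ContinuousWithinAt, hφ0]
    exact this
  · exact (hIoi.continuousAt (Ioi_mem_nhds hxpos)).continuousWithinAt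

theorem orliczLegendre_volume_ge'
    (n : ℕ) (hn : 0 < n) (K : Set (EuclideanSpace ℝ (Fin n))) (hK : IsStarBody K)
    (φ : ℝ → ℝ)
    (hφconv : ConvexOn ℝ (Ici (0 : ℝ)) φ)
    (hφmono : StrictMonoOn φ (Ici (0 : ℝ)))
    (hφ0 : φ 0 = 0)
    (L : Set (EuclideanSpace ℝ (Fin n))) (hL : IsEllipsoid L)
    (hLfeas : Ofun n φ K L ≤ 1)
    (hLmin : ∀ E : Set (EuclideanSpace ℝ (Fin n)), IsEllipsoid E →
      Ofun n φ K E ≤ 1 → volume L ≤ volume E) :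
    volume K ≤ volume L ∧ (volume L = volume K ↔ IsEllipsoid K) := by
  obtain ⟨hKc, hK0, hKstar, hKcont⟩ := hK
  have hKpre : PreBody K := ⟨hKc, hK0, hKstar⟩
  have hLpre : PreBody L := hL.preBody
  have hLcont := hL.radial_continuous
  haveI probK := hKpre.prob hn
  haveI probL := hLpre.prob hn
  haveI : (sphereMeasure n).IsOpenPosMeasure := sphereMeasure_isOpenPos hn
  have φcont : ContinuousOn φ (Ici (0:ℝ)) := phi_contOn hφconv hφmono hφ0
  have φ1pos : 0 < φ 1 := by
    have := hφmono (mem_Ici.2 le_rfl) (mem_Ici.2 zero_le_one) zero_lt_one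
    rwa [hφ0] at this
  set μK := normDualConical n K with hμKdef
  set μL := normDualConical n L with hμLdef
  set fdiv : sphere (0 : EuclideanSpace ℝ (Fin n)) 1 → ℝ :=
    fun u => radialFn K u / radialFn L u with hfdiv
  have hfdivcont : Continuous fdiv :=
    hKcont.div hLcont fun u => (hLpre.radial_pos u).ne'
  have hfdivnn : ∀ u, 0 ≤ fdiv u := fun u =>
    div_nonneg (hKpre.radial_pos u).le (hLpre.radial_pos u).le
  -- Step B : any feasible t bounds ∫ fdiv dμK
  have stepB : ∀ t : ℝ, 0 < t →
      (∫ u, φ (radialFn K u / (t * radialFn L u)) ∂μK) ≤ φ 1 →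
      ∫ u, fdiv u ∂μK ≤ t := by
    intro t ht hint
    set g : sphere (0 : EuclideanSpace ℝ (Fin n)) 1 → ℝ :=
      fun u => radialFn K u / (t * radialFn L u) with hg
    have hgcont : Continuous g :=
      hKcont.div (continuous_const.mul hLcont) fun u => (mul_pos ht (hLpre.radial_pos u)).ne'
    have hgnn : ∀ u, 0 ≤ g u := fun u =>
      div_nonneg (hKpre.radial_pos u).le (mul_pos ht (hLpre.radial_pos u)).le
    have hφg : Continuous fun u => φ (g u) :=
      φcont.comp_continuous hgcont fun u => mem_Ici.2 (hgnn u)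
    haveI : NeZero μK := ⟨IsProbabilityMeasure.ne_zero μK⟩
    haveI : NeZero μL := ⟨IsProbabilityMeasure.ne_zero μL⟩
    have hjen := hφconv.map_average_le (μ := μK) φcont isClosed_Ici
      (Filter.Eventually.of_forall fun u => mem_Ici.2 (hgnn u))
      (cont_integrable hgcont) (cont_integrable hφg)
    rw [average_eq_integral, average_eq_integral] at hjen
    have h1 : ∫ u, g u ∂μK ≤ 1 := by
      by_contra hlt
      push_neg at hlt
      have h2 : φ 1 < φ (∫ u, g u ∂μK) :=
        hφmono (mem_Ici.2 zero_le_one) (mem_Ici.2 (zero_le_one.trans hlt.le)) hlt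
      have h3 : φ (∫ u, g u ∂μK) ≤ φ 1 := hjen.trans hint
      linarith
    have hptw : ∀ u, fdiv u = t * g u := by
      intro u
      simp only [hfdiv, hg]
      rw [mul_div_assoc']
      rw [mul_div_mul_left _ _ ht.ne']
    calc ∫ u, fdiv u ∂μK = ∫ u, t * g u ∂μK := by
          exact integral_congr_ae (Filter.EventuallyEq.of_eq (funext hptw))
      _ = t * ∫ u, g u ∂μK := integral_const_mul t g
      _ ≤ t * 1 := mul_le_mul_of_nonneg_left h1 ht.le
      _ = t := mul_one t
  -- the feasible set is nonempty
  have stepNE : ∃ t : ℝ, 0 < t ∧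
      (∫ u, φ (radialFn K u / (t * radialFn L u)) ∂μK) ≤ φ 1 := by
    have hdim : Module.finrank ℝ (EuclideanSpace ℝ (Fin n)) = n := finrank_euclideanSpace_fin
    haveI : Nontrivial (EuclideanSpace ℝ (Fin n)) :=
      Module.nontrivial_of_finrank_pos (R := ℝ) (by rw [hdim]; exact hn)
    have hsne : (Set.univ : Set (sphere (0 : EuclideanSpace ℝ (Fin n)) 1)).Nonempty := by
      obtain ⟨y, hy⟩ := (NormedSpace.sphere_nonempty
        (E := EuclideanSpace ℝ (Fin n)) (x := 0) (r := 1)).2 zero_le_one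
      exact ⟨⟨y, hy⟩, mem_univ _⟩
    obtain ⟨u₀, -, hmax⟩ := isCompact_univ.exists_isMaxOn hsne hKcont.continuousOn
    obtain ⟨u₁, -, hmin⟩ := isCompact_univ.exists_isMinOn hsne hLcont.continuousOn
    set t₀ := radialFn K u₀ / radialFn L u₁ with ht₀def
    have ht₀ : 0 < t₀ := div_pos (hKpre.radial_pos u₀) (hLpre.radial_pos u₁)
    refine ⟨t₀, ht₀, ?_⟩
    have hle : ∀ u : sphere (0 : EuclideanSpace ℝ (Fin n)) 1,
        φ (radialFn K u / (t₀ * radialFn L u)) ≤ φ 1 := by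
      intro u
      have hargnn : 0 ≤ radialFn K u / (t₀ * radialFn L u) :=
        div_nonneg (hKpre.radial_pos u).le (mul_pos ht₀ (hLpre.radial_pos u)).le
      have harg : radialFn K u / (t₀ * radialFn L u) ≤ 1 := by
        rw [div_le_one (mul_pos ht₀ (hLpre.radial_pos u))]
        have h1 : t₀ * radialFn L u₁ = radialFn K u₀ :=
          div_mul_cancel₀ _ (hLpre.radial_pos u₁).ne'
        calc radialFn K u ≤ radialFn K u₀ := hmax (mem_univ u)
          _ = t₀ * radialFn L u₁ := h1.symm
          _ ≤ t₀ * radialFn L u :=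
            mul_le_mul_of_nonneg_left (hmin (mem_univ u)) ht₀.le
      exact hφmono.monotoneOn (mem_Ici.2 hargnn) (mem_Ici.2 zero_le_one) harg
    have hcontφt : Continuous fun u : sphere (0 : EuclideanSpace ℝ (Fin n)) 1 =>
        φ (radialFn K u / (t₀ * radialFn L u)) := by
      refine φcont.comp_continuous
        (hKcont.div (continuous_const.mul hLcont)
          fun u => (mul_pos ht₀ (hLpre.radial_pos u)).ne') fun u => mem_Ici.2 ?_
      exact div_nonneg (hKpre.radial_pos u).le (mul_pos ht₀ (hLpre.radial_pos u)).le
    calc (∫ u, φ (radialFn K u / (t₀ * radialFn L u)) ∂μK)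
        ≤ ∫ _, φ 1 ∂μK := integral_mono (cont_integrable hcontφt) (integrable_const _)  hle
      _ = φ 1 := by simp
  -- ∫ fdiv dμK ≤ 1
  have stepUpper : ∫ u, fdiv u ∂μK ≤ 1 := by
    obtain ⟨t₀, ht₀⟩ := stepNE
    rw [Ofun] at hLfeas
    have hlb : ∫ u, fdiv u ∂μK ≤ sInf {t : ℝ | 0 < t ∧
        (∫ u, φ (radialFn K u / (t * radialFn L u)) ∂(normDualConical n K)) ≤ φ 1} :=
      le_csInf ⟨t₀, ht₀⟩ fun t ht => stepB t ht.1 ht.2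
    exact hlb.trans hLfeas
  -- Jensen with x ^ p, p = (n+1)/n
  have hnR : (0:ℝ) < n := Nat.cast_pos.2 hn
  set p : ℝ := ((n:ℝ)+1)/(n:ℝ) with hpdef
  have hp : 1 < p := by rw [hpdef, lt_div_iff₀ hnR]; linarith
  have hppos : (0:ℝ) ≤ p := by positivity
  have gcont : Continuous fun x : ℝ => x ^ p := Real.continuous_rpow_const hppos
  set F : sphere (0 : EuclideanSpace ℝ (Fin n)) 1 → ℝ := fun u => (fdiv u) ^ n with hFdef
  have hFcont : Continuous F := hfdivcont.pow n
  have hFnn : ∀ u, 0 ≤ F u := fun u => pow_nonneg (hfdivnn u) n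
  have hgFcont : Continuous fun u => (F u) ^ p := gcont.comp hFcont
  have dich := (strictConvexOn_rpow hp).ae_eq_const_or_map_average_lt gcont.continuousOn
    isClosed_Ici (μ := μL) (Filter.Eventually.of_forall fun u => mem_Ici.2 (hFnn u))
    (cont_integrable hFcont) (cont_integrable hgFcont)
  rw [average_eq_integral, average_eq_integral] at dich
  set VK : ℝ := (volume K).toReal with hVKdef
  set VL : ℝ := (volume L).toReal with hVLdef
  have hVK : 0 < VK := hKpre.volR_pos
  have hVL : 0 < VL := hLpre.volR_pos
  set c : ℝ := VK / VL with hcdef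
  have hc : 0 < c := div_pos hVK hVL
  -- ⨍ F dμL = c
  have cF : ∫ u, F u ∂μL = c := by
    rw [hμLdef, integral_normDual hLpre hLcont]
    have hptw : ∀ u : sphere (0 : EuclideanSpace ℝ (Fin n)) 1,
        (radialFn L u ^ n / (n * VL)) * F u = (radialFn K u ^ n) * (n * VL)⁻¹ := by
      intro u
      simp only [hFdef, hfdiv]
      have hL0 := (hLpre.radial_pos u).ne'
      rw [div_pow]
      field_simp
    rw [show (volume L).toReal = VL from rfl]
    calc ∫ u, (radialFn L u ^ n / (n * VL)) * F u ∂(sphereMeasure n)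
        = ∫ u, (radialFn K u ^ n) * (n * VL)⁻¹ ∂(sphereMeasure n) :=
          integral_congr_ae (Filter.EventuallyEq.of_eq (funext hptw))
      _ = (∫ u, radialFn K u ^ n ∂(sphereMeasure n)) * (n * VL)⁻¹ := integral_mul_const _ _
      _ = (n * VK) * (n * VL)⁻¹ := by rw [hKpre.integral_radial_pow hn hKcont]
      _ = c := by rw [hcdef]; field_simp
  -- (F u) ^ p = fdiv u ^ (n+1)
  have gF : ∀ u, (F u) ^ p = (fdiv u) ^ (n+1) := by
    intro u
    simp only [hFdef]
    rw [← Real.rpow_natCast (fdiv u) n, ← Real.rpow_mul (hfdivnn u)]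
    have hnp : (n:ℝ) * p = ((n+1 : ℕ) : ℝ) := by
      rw [hpdef]; push_cast; field_simp
    rw [hnp, Real.rpow_natCast]
  -- ∫ (F)^p dμL = c * ∫ fdiv dμK
  have hBrel : ∫ u, (F u) ^ p ∂μL = c * ∫ u, fdiv u ∂μK := by
    have hB : ∫ u, (F u) ^ p ∂μL
        = (∫ u, (radialFn K u ^ (n+1) / radialFn L u) ∂(sphereMeasure n)) * (n * VL)⁻¹ := by
      rw [hμLdef, integral_normDual hLpre hLcont]
      have hptw : ∀ u : sphere (0 : EuclideanSpace ℝ (Fin n)) 1,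
          (radialFn L u ^ n / (n * (volume L).toReal)) * (F u) ^ p
            = (radialFn K u ^ (n+1) / radialFn L u) * (n * VL)⁻¹ := by
        intro u
        rw [gF u]
        simp only [hfdiv]
        have hL0 := (hLpre.radial_pos u).ne'
        rw [show (volume L).toReal = VL from rfl]
        rw [div_pow]
        field_simp
        ring
      calc ∫ u, (radialFn L u ^ n / (n * (volume L).toReal)) * (F u) ^ p ∂(sphereMeasure n)
          = ∫ u, (radialFn K u ^ (n+1) / radialFn L u) * (n * VL)⁻¹ ∂(sphereMeasure n) :=
            integral_congr_ae (Filter.EventuallyEq.of_eq (funext hptw))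
        _ = _ := integral_mul_const _ _
    have hA : ∫ u, fdiv u ∂μK
        = (∫ u, (radialFn K u ^ (n+1) / radialFn L u) ∂(sphereMeasure n)) * (n * VK)⁻¹ := by
      rw [hμKdef, integral_normDual hKpre hKcont]
      have hptw : ∀ u : sphere (0 : EuclideanSpace ℝ (Fin n)) 1,
          (radialFn K u ^ n / (n * (volume K).toReal)) * fdiv u
            = (radialFn K u ^ (n+1) / radialFn L u) * (n * VK)⁻¹ := by
        intro u
        simp only [hfdiv]
        have hL0 := (hLpre.radial_pos u).ne'
        rw [show (volume K).toReal = VK from rfl]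
        field_simp
        ring
      calc ∫ u, (radialFn K u ^ n / (n * (volume K).toReal)) * fdiv u ∂(sphereMeasure n)
          = ∫ u, (radialFn K u ^ (n+1) / radialFn L u) * (n * VK)⁻¹ ∂(sphereMeasure n) :=
            integral_congr_ae (Filter.EventuallyEq.of_eq (funext hptw))
        _ = _ := integral_mul_const _ _
    rw [hB, hA, hcdef]
    field_simp
  -- the key inequality  c ^ p ≤ c * ∫ fdiv dμK
  have key : c ^ p ≤ c * ∫ u, fdiv u ∂μK := by
    rcases dich with heq | hlt
    · have : ∫ u, (F u) ^ p ∂μL = c ^ p := by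
        have h2 : (fun u => (F u) ^ p) =ᵐ[μL] fun _ => c ^ p := by
          filter_upwards [heq] with u hu
          rw [Function.const_apply] at hu
          rw [hu, cF]
        rw [integral_congr_ae h2]
        simp
      rw [← this, hBrel]
    · rw [cF] at hlt
      rw [← hBrel]
      exact hlt.le
  -- conclude V(K) ≤ V(L)
  have hcle : c ≤ 1 := by
    by_contra hc1
    push_neg at hc1
    have h1 : c ^ p ≤ c := by
      calc c ^ p ≤ c * ∫ u, fdiv u ∂μK := key
        _ ≤ c * 1 := mul_le_mul_of_nonneg_left stepUpper hc.le
        _ = c := mul_one c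
    have h2 : c ^ (1:ℝ) < c ^ p := (Real.rpow_lt_rpow_left_iff hc1).2 hp
    rw [Real.rpow_one] at h2
    linarith
  have part1R : VK ≤ VL := by
    rw [hcdef, div_le_one hVL] at hcle
    exact hcle
  have part1 : volume K ≤ volume L :=
    (ENNReal.toReal_le_toReal hKpre.vol_ne_top hLpre.vol_ne_top).1 part1R
  refine ⟨part1, ?_, ?_⟩
  · -- equality → K is an ellipsoid
    intro hvol
    have hVKL : VK = VL := by rw [hVKdef, hVLdef, hvol]
    have hceq : c = 1 := by rw [hcdef, hVKL, div_self hVL.ne']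
    have hbranch : F =ᵐ[μL] Function.const _ (∫ u, F u ∂μL) := by
      rcases dich with heq | hlt
      · exact heq
      · exfalso
        rw [cF, hceq] at hlt
        rw [hBrel, hceq, one_mul] at hlt
        rw [Real.one_rpow] at hlt
        linarith [stepUpper]
    rw [cF, hceq] at hbranch
    have h2 : ∀ᵐ u ∂μL, fdiv u = 1 := by
      filter_upwards [hbranch] with u hu
      rw [Function.const_apply] at hu
      simp only [hFdef] at hu
      have := (pow_left_inj₀ (hfdivnn u) zero_le_one hn.ne').1 (by rw [hu, one_pow])
      exact this
    have wmeas : Measurable fun u : sphere (0 : EuclideanSpace ℝ (Fin n)) 1 =>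
        ENNReal.ofReal ((radialFn L u) ^ n / (n * (volume L).toReal)) :=
      (((hLcont.pow n).div_const _).measurable).ennreal_ofReal
    have h3 : ∀ᵐ u ∂(sphereMeasure n), fdiv u = 1 := by
      have h2' : ∀ᵐ u ∂((sphereMeasure n).withDensity fun u =>
          ENNReal.ofReal ((radialFn L u) ^ n / (n * (volume L).toReal))), fdiv u = 1 := h2
      have := (ae_withDensity_iff wmeas).1 h2'
      filter_upwards [this] with u hu
      refine hu ?_
      have hpos : 0 < (radialFn L u) ^ n / (n * (volume L).toReal) := by
        have h1 := hLpre.radial_pos u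
        have h2 := hLpre.volR_pos
        positivity
      exact (ENNReal.ofReal_pos.2 hpos).ne'
    have h4 : fdiv = fun _ => 1 :=
      (Continuous.ae_eq_iff_eq (sphereMeasure n) hfdivcont continuous_const).1 h3
    have h5 : ∀ u : sphere (0 : EuclideanSpace ℝ (Fin n)) 1,
        radialFn K u = radialFn L u := by
      intro u
      have h6 : radialFn K u / radialFn L u = 1 := congrFun h4 u
      rw [div_eq_one_iff_eq (hLpre.radial_pos u).ne'] at h6
      exact h6
    rw [hKpre.eq_of_radial_eq hLpre h5]
    exact hL
  · -- K ellipsoid → equality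
    intro hKell
    have hOK : Ofun n φ K K ≤ 1 := by
      apply csInf_le ⟨0, fun t ht => ht.1.le⟩
      refine ⟨one_pos, ?_⟩
      have hpt : ∀ u : sphere (0 : EuclideanSpace ℝ (Fin n)) 1,
          φ (radialFn K u / (1 * radialFn K u)) = φ 1 := by
        intro u
        rw [one_mul, div_self (hKpre.radial_pos u).ne']
      have : (∫ u, φ (radialFn K u / (1 * radialFn K u)) ∂(normDualConical n K)) = φ 1 := by
        rw [integral_congr_ae (Filter.EventuallyEq.of_eq (funext hpt))]
        simp
      rw [this]
    exact le_antisymm (hLmin K hKell hOK) part1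

end Main


/-- Let `K` be a star body about the origin, `φ ∈ Φ`, and let
`L = L_φ K` be the Orlicz-Legendre ellipsoid, i.e. an origin-symmetric ellipsoid
with `O_φ(K,L) ≤ 1` of minimal volume among all such ellipsoids.  Then
`V(L_φ K) ≥ V(K)`, with equality if and only if `K` is an origin-symmetric
ellipsoid. -/
theorem orliczLegendre_volume_ge
    (n : ℕ) (hn : 0 < n) (K : Set (EuclideanSpace ℝ (Fin n))) (hK : IsStarBody K)
    (φ : ℝ → ℝ)
    (hφconv : ConvexOn ℝ (Ici (0 : ℝ)) φ)
    (hφmono : StrictMonoOn φ (Ici (0 : ℝ)))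
    (hφ0 : φ 0 = 0)
    (L : Set (EuclideanSpace ℝ (Fin n))) (hL : IsEllipsoid L)
    (hLfeas : Ofun n φ K L ≤ 1)
    (hLmin : ∀ E : Set (EuclideanSpace ℝ (Fin n)), IsEllipsoid E →
      Ofun n φ K E ≤ 1 → volume L ≤ volume E) :
    volume K ≤ volume L ∧ (volume L = volume K ↔ IsEllipsoid K) := by
  exact orliczLegendre_volume_ge' n hn K hK φ hφconv hφmono hφ0 L hL hLfeas hLmin
end
end

section
/- Let F:[0,∞)^n → [0,∞) be continuous and convex with ∇F(e) = c·e for some c > 0, where e = (1,…,1). Then for all a ∈ (0,∞)^n with ∏_{j=1}^n a_j = 1, one has F(a) ≥ F(e). -/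
open Set

/-- Let `F : [0,∞)^n → [0,∞)` be continuous and convex with
gradient `∇F(e) = c • e` at `e = (1,…,1)` for some `c > 0`.  Then `F(a) ≥ F(e)`
for every `a ∈ (0,∞)^n` with `∏ a_j = 1`. -/
theorem convex_gradient_min_on_prod_one
    (n : ℕ) (hn : 0 < n) (F : EuclideanSpace ℝ (Fin n) → ℝ)
    (hFcont : ContinuousOn F {a : EuclideanSpace ℝ (Fin n) | ∀ i, 0 ≤ a i})
    (hFconv : ConvexOn ℝ {a : EuclideanSpace ℝ (Fin n) | ∀ i, 0 ≤ a i} F)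
    (hFnn : ∀ a : EuclideanSpace ℝ (Fin n), (∀ i, 0 ≤ a i) → 0 ≤ F a)
    (c : ℝ) (hc : 0 < c)
    (hgrad : HasGradientAt F (c • (WithLp.toLp 2 (fun _ => 1) : EuclideanSpace ℝ (Fin n)))
      (WithLp.toLp 2 (fun _ => 1) : EuclideanSpace ℝ (Fin n)))
    (a : EuclideanSpace ℝ (Fin n)) (ha : ∀ i, 0 < a i) (hprod : ∏ i, a i = 1) :
    F (WithLp.toLp 2 (fun _ => 1) : EuclideanSpace ℝ (Fin n)) ≤ F a := by
  set e : EuclideanSpace ℝ (Fin n) := (WithLp.toLp 2 (fun _ => 1)) with he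
  -- AM-GM : n ≤ ∑ a i
  have hsum : (n : ℝ) ≤ ∑ i, a i := by
    have hw : ∑ _i : Fin n, (1 / n : ℝ) = 1 := by
      simp [Finset.sum_const, mul_comm]
      field_simp
    have := Real.geom_mean_le_arith_mean_weighted Finset.univ (fun _ => (1 / n : ℝ)) a
      (fun i _ => by positivity) hw (fun i _ => (ha i).le)
    have hz : ∏ i, (a i) ^ (1 / n : ℝ) = 1 := by
      rw [Real.finset_prod_rpow _ _ (fun i _ => (ha i).le), hprod, Real.one_rpow]
    rw [hz] at this
    have hn' : (0 : ℝ) < n := by exact_mod_cast hn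
    calc (n : ℝ) = n * 1 := by ring
      _ ≤ n * ∑ i, (1 / n : ℝ) * a i := by nlinarith
      _ = ∑ i, a i := by
          rw [Finset.mul_sum]
          apply Finset.sum_congr rfl
          intro i _
          field_simp
  -- the derivative D of t ↦ F (e + t • (a - e)) at 0
  set D : ℝ := (InnerProductSpace.toDual ℝ (EuclideanSpace ℝ (Fin n)) (c • e)) (a - e) with hD
  have hDval : D = c * (∑ i, a i - n) := by
    rw [hD]
    simp only [InnerProductSpace.toDual_apply_apply]
    rw [real_inner_smul_left]
    have : (inner ℝ e (a - e) : ℝ) = ∑ i, (a i - 1) := by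
      rw [PiLp.inner_apply]
      apply Finset.sum_congr rfl
      intro i _
      simp [he, RCLike.inner_apply]
    rw [this, Finset.sum_sub_distrib]
    simp [mul_comm]
  have hDpos : 0 ≤ D := by
    rw [hDval]
    have : (0:ℝ) ≤ ∑ i, a i - n := by linarith
    positivity
  -- φ has derivative D at 0
  have hpath : HasDerivAt (fun t : ℝ => e + t • (a - e)) (a - e) 0 := by
    simpa using ((hasDerivAt_id (0:ℝ)).smul_const (a - e)).const_add e
  have hφ : HasDerivAt (fun t : ℝ => F (e + t • (a - e))) D 0 := by
    have hF' : HasFDerivAt F (InnerProductSpace.toDual ℝ (EuclideanSpace ℝ (Fin n)) (c • e))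
        (e + (0:ℝ) • (a - e)) := by
      simpa using hgrad.hasFDerivAt
    exact hF'.comp_hasDerivAt 0 hpath
  -- slope bound via convexity
  have hslope : ∀ t ∈ Ioc (0:ℝ) 1,
      slope (fun t : ℝ => F (e + t • (a - e))) 0 t ≤ F a - F e := by
    intro t ht
    have ht0 : 0 < t := ht.1
    have ht1 : t ≤ 1 := ht.2
    have hmem : e + t • (a - e) = (1 - t) • e + t • a := by
      module
    have hconv := hFconv.2 (x := e) (y := a) (fun i => by simp [he])
      (fun i => (ha i).le) (by linarith : (0:ℝ) ≤ 1 - t) ht0.le (by ring)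
    rw [slope_def_field]
    rw [hmem]
    have : F ((1 - t) • e + t • a) ≤ (1 - t) * F e + t * F a := hconv
    have h0 : e + (0:ℝ) • (a - e) = e := by simp
    rw [h0, sub_zero, div_le_iff₀ ht0]
    nlinarith
  -- pass to the limit
  have htend : Filter.Tendsto (slope (fun t : ℝ => F (e + t • (a - e))) 0)
      (nhdsWithin 0 (Ioi (0:ℝ))) (nhds D) := by
    have := hasDerivAt_iff_tendsto_slope.1 hφ
    exact this.mono_left (nhdsWithin_mono _ (fun x hx => ne_of_gt hx))
  have hle : D ≤ F a - F e := by
    refine le_of_tendsto htend ?_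
    filter_upwards [Ioc_mem_nhdsGT_of_mem (by constructor <;> norm_num : (0:ℝ) ∈ Ico (0:ℝ) 1)]
      with t ht using hslope t ht
  linarith
end
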